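/- Let Y be a random variable on ℕ with moment generating function G_Y(ξ) = G^B(log((1−p)/(1−p e^ξ))) for some function G^B, where 0 < p < 1 (i.e., Y is a mixed negative binomial: Y | B is NegBin(B, 1−p)). Let Y' be the binomial thinning of Y with retention probability p_d ∈ (0,1), i.e., Y' | Y ~ Bin(Y, p_d). Then the moment generating function of Y' equals G^B(log((1−p')/(1−p' e^ξ))) with p' = p·p_d / (1 − p + p·p_d). In particular, the parametric family is invariant under thinning. -/

import Mathlib

open MeasureTheory ProbabilityTheory
open scoped ENNReal

lemma lintegral_nat_comp' {Ω : Type*} [MeasurableSpace Ω] (P : Measure Ω)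
    (f : Ω → ℕ) (hf : Measurable f) (g : ℕ → ℝ≥0∞) :
    ∫⁻ ω, g (f ω) ∂P = ∑' n, g n * P {ω | f ω = n} := by
  rw [← lintegral_map measurable_from_nat hf, lintegral_countable']
  apply tsum_congr
  intro n
  rw [Measure.map_apply hf (measurableSet_singleton n)]
  rfl

lemma inner_binom_sum (pd c : ℝ) (hpd0 : 0 ≤ pd) (hpd1 : pd ≤ 1) (hc : 0 ≤ c) (n : ℕ) :
    ∑' k : ℕ, ENNReal.ofReal (c ^ k * ((n.choose k : ℝ) * pd ^ k * (1 - pd) ^ (n - k)))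
      = ENNReal.ofReal ((pd * c + (1 - pd)) ^ n) := by
  rw [tsum_eq_sum (s := Finset.range (n+1)) ?_]
  · rw [← ENNReal.ofReal_sum_of_nonneg ?_]
    · congr 1
      rw [add_pow]
      apply Finset.sum_congr rfl
      intro k _
      ring
    · intro k _
      exact mul_nonneg (pow_nonneg hc _)
        (mul_nonneg (mul_nonneg (Nat.cast_nonneg _) (pow_nonneg hpd0 _))
          (pow_nonneg (by linarith) _))
  · intro k hk
    have : n.choose k = 0 := Nat.choose_eq_zero_of_lt (by simpa using hk)
    simp [this]

lemma mgf_nat_eq_lintegral {Ω : Type*} [MeasurableSpace Ω] (P : Measure Ω)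
    (f : Ω → ℕ) (hf : Measurable f) (t : ℝ) :
    mgf (fun ω => (f ω : ℝ)) P t =
      (∫⁻ ω, ENNReal.ofReal (Real.exp (t * (f ω : ℝ))) ∂P).toReal := by
  rw [mgf, integral_eq_lintegral_of_nonneg_ae]
  · exact ae_of_all _ fun ω => (Real.exp_pos _).le
  · exact (Real.measurable_exp.comp
      ((measurable_from_nat.comp hf).const_mul t)).aestronglyMeasurable

/-- Invariance of the mixed negative binomial family under binomial thinning:
if `Y` has mgf `ξ ↦ G^B(log((1-p)/(1-p e^ξ)))` and `Y' | Y ~ Bin(Y, p_d)`,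
then `Y'` has mgf `ξ ↦ G^B(log((1-p')/(1-p' e^ξ)))` with
`p' = p p_d / (1 - p + p p_d)`. -/
theorem thinning_invariance_mixed_negbin
    {Ω : Type*} [MeasurableSpace Ω] (P : Measure Ω) [IsProbabilityMeasure P]
    (Y Y' : Ω → ℕ) (hYmeas : Measurable Y) (hY'meas : Measurable Y')
    (GB : ℝ → ℝ) (p pd : ℝ) (hp0 : 0 < p) (hp1 : p < 1)
    (hpd0 : 0 < pd) (hpd1 : pd < 1)
    (hmgfY : ∀ ξ : ℝ, p * Real.exp ξ < 1 →
      mgf (fun ω => (Y ω : ℝ)) P ξ =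
        GB (Real.log ((1 - p) / (1 - p * Real.exp ξ))))
    (hthin : ∀ n k : ℕ, P {ω | Y' ω = k ∧ Y ω = n} =
      P {ω | Y ω = n} *
        ENNReal.ofReal ((n.choose k : ℝ) * pd ^ k * (1 - pd) ^ (n - k))) :
    ∀ ξ : ℝ, (p * pd / (1 - p + p * pd)) * Real.exp ξ < 1 →
      mgf (fun ω => (Y' ω : ℝ)) P ξ =
        GB (Real.log ((1 - p * pd / (1 - p + p * pd)) /
          (1 - (p * pd / (1 - p + p * pd)) * Real.exp ξ))) := by
  intro ξ hξ
  set c := Real.exp ξ with hc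
  have hcpos : 0 < c := Real.exp_pos ξ
  set q : ℝ := 1 - p + p * pd with hqdef
  have hqpos : 0 < q := by nlinarith
  set e' : ℝ := 1 - pd + pd * c with he'def
  have he'pos : 0 < e' := by nlinarith
  set ξ' : ℝ := Real.log e' with hξ'def
  have hexp : Real.exp ξ' = e' := Real.exp_log he'pos
  have hppdc : p * pd * c < q := by
    have h1 : p * pd / q * c < 1 := hξ
    rw [div_mul_eq_mul_div, div_lt_one hqpos] at h1
    exact h1
  have hcond : p * Real.exp ξ' < 1 := by
    rw [hexp, he'def]; nlinarith
  -- key lintegral identity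
  have hdecomp : ∀ k : ℕ, P {ω | Y' ω = k} = ∑' n, P {ω | Y' ω = k ∧ Y ω = n} := by
    intro k
    have hset : {ω | Y' ω = k} = ⋃ n, {ω | Y' ω = k ∧ Y ω = n} := by
      ext ω; simp
    rw [hset, measure_iUnion]
    · intro m n hmn
      simp only [Function.onFun, Set.disjoint_left]
      rintro ω ⟨_, h1⟩ ⟨_, h2⟩
      exact hmn (h1 ▸ h2 ▸ rfl)
    · intro n
      exact (hY'meas (measurableSet_singleton k)).inter (hYmeas (measurableSet_singleton n))
  have key : ∫⁻ ω, ENNReal.ofReal (Real.exp (ξ * (Y' ω : ℝ))) ∂P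
      = ∫⁻ ω, ENNReal.ofReal (Real.exp (ξ' * (Y ω : ℝ))) ∂P := by
    rw [lintegral_nat_comp' P Y' hY'meas (fun k => ENNReal.ofReal (Real.exp (ξ * (k : ℝ)))),
        lintegral_nat_comp' P Y hYmeas (fun n => ENNReal.ofReal (Real.exp (ξ' * (n : ℝ))))]
    calc ∑' k : ℕ, ENNReal.ofReal (Real.exp (ξ * (k : ℝ))) * P {ω | Y' ω = k}
        = ∑' (k : ℕ) (n : ℕ), ENNReal.ofReal (Real.exp (ξ * (k : ℝ))) *
            (P {ω | Y ω = n} *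
              ENNReal.ofReal ((n.choose k : ℝ) * pd ^ k * (1 - pd) ^ (n - k))) := by
          apply tsum_congr; intro k
          rw [hdecomp k, ← ENNReal.tsum_mul_left]
          apply tsum_congr; intro n
          rw [hthin n k]
      _ = ∑' (n : ℕ) (k : ℕ), ENNReal.ofReal (Real.exp (ξ * (k : ℝ))) *
            (P {ω | Y ω = n} *
              ENNReal.ofReal ((n.choose k : ℝ) * pd ^ k * (1 - pd) ^ (n - k))) :=
          ENNReal.tsum_comm
      _ = ∑' n : ℕ, P {ω | Y ω = n} *
            ∑' k : ℕ, ENNReal.ofReal (c ^ k *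
              ((n.choose k : ℝ) * pd ^ k * (1 - pd) ^ (n - k))) := by
          apply tsum_congr; intro n
          rw [← ENNReal.tsum_mul_left]
          apply tsum_congr; intro k
          have hek : Real.exp (ξ * (k : ℝ)) = c ^ k := by
            rw [mul_comm, Real.exp_nat_mul]
          rw [hek, ENNReal.ofReal_mul (pow_nonneg hcpos.le k)]
          ring
      _ = ∑' n : ℕ, ENNReal.ofReal (Real.exp (ξ' * (n : ℝ))) * P {ω | Y ω = n} := by
          apply tsum_congr; intro n
          rw [inner_binom_sum pd c hpd0.le hpd1.le hcpos.le n]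
          have hen : Real.exp (ξ' * (n : ℝ)) = (pd * c + (1 - pd)) ^ n := by
            rw [mul_comm, Real.exp_nat_mul, hexp, he'def]
            ring_nf
          rw [hen, mul_comm]
  have hmgf_eq : mgf (fun ω => (Y' ω : ℝ)) P ξ = mgf (fun ω => (Y ω : ℝ)) P ξ' := by
    rw [mgf_nat_eq_lintegral P Y' hY'meas ξ, mgf_nat_eq_lintegral P Y hYmeas ξ', key]
  rw [hmgf_eq, hmgfY ξ' hcond]
  congr 2
  rw [hexp]
  have hd1 : 1 - p * e' ≠ 0 := by nlinarith
  have hd2 : (1 : ℝ) - p * pd / q * c ≠ 0 := by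
    have : 0 < 1 - p * pd / q * c := by
      rw [div_mul_eq_mul_div]
      have : p * pd * c / q < 1 := (div_lt_one hqpos).mpr hppdc
      linarith
    linarith
  rw [he'def]
  have hnum : 1 - p * pd / q = (1 - p) / q := by
    rw [eq_div_iff hqpos.ne', sub_mul, one_mul, div_mul_cancel₀ _ hqpos.ne', hqdef]; ring
  have hden : 1 - p * (1 - pd + pd * c) = q * (1 - p * pd / q * c) := by
    have key2 : q * (p * pd / q * c) = p * pd * c := by
      rw [div_mul_eq_mul_div, mul_div_assoc', mul_comm q, mul_div_assoc, div_self hqpos.ne', mul_one]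
    rw [mul_sub, mul_one, key2, hqdef]; ring
  rw [hnum, hden]
  exact (div_div _ _ _).symm
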